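/- The foliation v' = λ/μ − (x/(1−x²))·v + (μ/(1−x²))·v² of the Chebyshev-associated quadratic system is mapped to the foliation w' = (−2 − 4λ + (4λ−1)x²)/(4(1−x²)²) − w² by the transformation w = −x/(2(1−x²)) − μv/(1−x²): if v(x) solves the first equation on an interval where x² ≠ 1, then w(x) := −x/(2(1−x²)) − μ·v(x)/(1−x²) solves the second. -/

import Mathlib

/-- The foliation `v' = λ/μ − (x/(1−x²))v + (μ/(1−x²))v²` is mapped to
`w' = (−2 − 4λ + (4λ−1)x²)/(4(1−x²)²) − w²` by the transformation
`w = −x/(2(1−x²)) − μv/(1−x²)`. -/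
theorem chebyshev_foliation_transform (lam μ : ℝ) (hμ : μ ≠ 0) (s : Set ℝ)
    (hs : s ⊆ Set.Ioo (-1) 1) (v : ℝ → ℝ)
    (hv : ∀ x ∈ s, HasDerivAt v
      (lam / μ - x / (1 - x ^ 2) * v x + μ / (1 - x ^ 2) * (v x) ^ 2) x) :
    ∀ x ∈ s,
      HasDerivAt (fun u => -u / (2 * (1 - u ^ 2)) - μ * v u / (1 - u ^ 2))
        ((-2 - 4 * lam + (4 * lam - 1) * x ^ 2) / (4 * (1 - x ^ 2) ^ 2)
          - (-x / (2 * (1 - x ^ 2)) - μ * v x / (1 - x ^ 2)) ^ 2) x := by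
  intro x hx
  obtain ⟨hx1, hx2⟩ := hs hx
  have h1 : 1 - x ^ 2 ≠ 0 := by nlinarith
  have h2 : (2 : ℝ) * (1 - x ^ 2) ≠ 0 := mul_ne_zero two_ne_zero h1
  have hv' := hv x hx
  have h3 := (hasDerivAt_id x).neg.div (((hasDerivAt_pow 2 x).const_sub 1).const_mul 2) h2
  have h4 := ((hv x hx).const_mul μ).div ((hasDerivAt_pow 2 x).const_sub 1) h1
  convert h3.sub h4 using 1
  · rfl
  · rfl
  · rfl
  simp only [Pi.neg_apply, id_eq]
  push_cast
  field_simp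
  ring
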